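/- Let Ω ⊂ ℝ^N be a bounded open set, p ≥ 2, g ∈ L^p(Ω) and h ∈ C¹(ℝ^n) (a continuously differentiable function h : ℝ^n → ℝ). Then the map which sends u ∈ C(Ω̄; ℝ^n) to the function x ↦ g(x) h(u(x)) is a continuously Fréchet differentiable (C¹) map from C(Ω̄; ℝ^n) into L^p(Ω), and its Fréchet derivative at u applied to v ∈ C(Ω̄; ℝ^n) is the function x ↦ g(x) ∇h(u(x)) · v(x). -/

import Mathlib

open MeasureTheory ENNReal Classical

/-- The extension by zero of a continuous `ℝ^n`-valued function on `closure Ω`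
to the whole space. -/
noncomputable def extendV {N n : ℕ} (Ω : Set (Fin N → ℝ)) (u : C(closure Ω, Fin n → ℝ)) :
    (Fin N → ℝ) → (Fin n → ℝ) :=
  fun x => if hx : x ∈ closure Ω then u ⟨x, hx⟩ else 0

section CompAux

open Metric

variable {K : Type*} [TopologicalSpace K] [CompactSpace K]
  {E F : Type*} [NormedAddCommGroup E] [NormedSpace ℝ E] [ProperSpace E]
  [NormedAddCommGroup F] [NormedSpace ℝ F]

variable (h : E → F)

/-- Post-composition with `h` on continuous maps. -/
noncomputable def compCM (hh : Continuous h) (u : C(K, E)) : C(K, F) :=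
  ⟨fun x => h (u x), hh.comp u.continuous⟩

/-- The derivative of `h` along `u`, as a continuous map. -/
noncomputable def fderivCM (hh : ContDiff ℝ 1 h) (u : C(K, E)) : C(K, E →L[ℝ] F) :=
  ⟨fun x => fderiv ℝ h (u x), (hh.continuous_fderiv one_ne_zero).comp u.continuous⟩

/-- The candidate derivative of `compCM`. -/
noncomputable def compD (hh : ContDiff ℝ 1 h) (u : C(K, E)) : C(K, E) →L[ℝ] C(K, F) :=
  LinearMap.mkContinuous
    { toFun := fun v => ⟨fun x => fderiv ℝ h (u x) (v x),
        ((hh.continuous_fderiv one_ne_zero).comp u.continuous).clm_apply v.continuous⟩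
      map_add' := fun v w => by ext x; simp
      map_smul' := fun c v => by ext x; simp }
    ‖fderivCM h hh u‖
    (fun v => by
      refine (ContinuousMap.norm_le _ (mul_nonneg (norm_nonneg (fderivCM h hh u))
        (norm_nonneg v))).mpr fun x => ?_
      calc ‖fderiv ℝ h (u x) (v x)‖ ≤ ‖fderiv ℝ h (u x)‖ * ‖v x‖ :=
            ContinuousLinearMap.le_opNorm _ _
        _ ≤ ‖fderivCM h hh u‖ * ‖v‖ :=
            mul_le_mul ((fderivCM h hh u).norm_coe_le_norm x) (v.norm_coe_le_norm x)
              (norm_nonneg (v x)) (norm_nonneg (fderivCM h hh u)))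

theorem compD_apply (hh : ContDiff ℝ 1 h) (u v : C(K, E)) (x : K) :
    compD h hh u v x = fderiv ℝ h (u x) (v x) := rfl

/-- Key uniform continuity estimate for the derivative near the range of `u`. -/
theorem compKey (hh : ContDiff ℝ 1 h) (u : C(K, E)) {ε : ℝ} (hε : 0 < ε) :
    ∃ δ > 0, ∀ (x : K) (z : E), dist z (u x) < δ →
      ‖fderiv ℝ h z - fderiv ℝ h (u x)‖ ≤ ε := by
  have hS : IsCompact (Set.range (⇑u)) := isCompact_range u.continuous
  have hT : IsCompact (cthickening 1 (Set.range (⇑u))) := hS.cthickening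
  have hUC : UniformContinuousOn (fderiv ℝ h) (cthickening 1 (Set.range (⇑u))) :=
    hT.uniformContinuousOn_of_continuous (hh.continuous_fderiv one_ne_zero).continuousOn
  obtain ⟨δ, hδ, hd⟩ := (Metric.uniformContinuousOn_iff).mp hUC ε hε
  refine ⟨min δ 1, lt_min hδ one_pos, fun x z hz => ?_⟩
  have hux : u x ∈ cthickening 1 (Set.range (⇑u)) :=
    self_subset_cthickening _ (Set.mem_range_self x)
  have hzT : z ∈ cthickening 1 (Set.range (⇑u)) :=
    mem_cthickening_of_dist_le z (u x) 1 _ (Set.mem_range_self x)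
      (le_of_lt (lt_of_lt_of_le hz (min_le_right _ _)))
  have := hd z hzT (u x) hux (lt_of_lt_of_le hz (min_le_left _ _))
  rw [dist_eq_norm] at this
  exact this.le

theorem compCM_hasFDerivAt (hh : ContDiff ℝ 1 h) (u : C(K, E)) :
    HasFDerivAt (compCM h hh.continuous) (compD h hh u) u := by
  rw [hasFDerivAt_iff_isLittleO_nhds_zero, Asymptotics.isLittleO_iff]
  intro c hc
  obtain ⟨δ, hδ, hkey⟩ := compKey h hh u hc
  rw [Metric.eventually_nhds_iff]
  refine ⟨δ, hδ, fun {v} hv => ?_⟩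
  rw [dist_zero_right] at hv
  refine (ContinuousMap.norm_le _ (mul_nonneg hc.le (norm_nonneg v))).mpr fun x => ?_
  have hseg : ∀ z ∈ segment ℝ (u x) (u x + v x),
      ‖fderiv ℝ h z - fderiv ℝ h (u x)‖ ≤ c := by
    rintro z hz
    obtain ⟨a, b, ha, hb, hab, rfl⟩ := hz
    apply hkey
    have hz' : a • u x + b • (u x + v x) - u x = b • v x := by
      have ha' : a = 1 - b := by linarith
      rw [ha']
      module
    rw [dist_eq_norm, hz', norm_smul, Real.norm_of_nonneg hb]
    calc b * ‖v x‖ ≤ 1 * ‖v x‖ := by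
          apply mul_le_mul_of_nonneg_right _ (norm_nonneg _)
          linarith
      _ = ‖v x‖ := one_mul _
      _ ≤ ‖v‖ := v.norm_coe_le_norm x
      _ < δ := hv
  have hmv := Convex.norm_image_sub_le_of_norm_hasFDerivWithin_le'
    (f := h) (f' := fderiv ℝ h) (φ := fderiv ℝ h (u x)) (C := c)
    (s := segment ℝ (u x) (u x + v x))
    (fun z _ => ((hh.differentiable one_ne_zero) z).hasFDerivAt.hasFDerivWithinAt)
    hseg (convex_segment _ _) (left_mem_segment _ _ _) (right_mem_segment _ _ _)
  have h1 : (compCM h hh.continuous (u + v) - compCM h hh.continuous u - compD h hh u v) x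
      = h (u x + v x) - h (u x) - fderiv ℝ h (u x) (v x) := by
    simp [compCM, compD_apply]
  rw [h1]
  have h2 : u x + v x - u x = v x := by abel
  rw [h2] at hmv
  calc ‖h (u x + v x) - h (u x) - fderiv ℝ h (u x) (v x)‖ ≤ c * ‖v x‖ := hmv
    _ ≤ c * ‖v‖ := mul_le_mul_of_nonneg_left (v.norm_coe_le_norm x) hc.le

theorem compD_continuous (hh : ContDiff ℝ 1 h) : Continuous (compD (K := K) h hh) := by
  rw [continuous_iff_continuousAt]
  intro u
  rw [Metric.continuousAt_iff]
  intro ε hε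
  obtain ⟨δ, hδ, hkey⟩ := compKey h hh u (half_pos hε)
  refine ⟨δ, hδ, fun {w} hw => ?_⟩
  have hle : ‖compD h hh w - compD h hh u‖ ≤ ε / 2 := by
    apply ContinuousLinearMap.opNorm_le_bound _ (half_pos hε).le
    intro v
    refine (ContinuousMap.norm_le _ (mul_nonneg (half_pos hε).le (norm_nonneg v))).mpr
      fun x => ?_
    have hwx : dist (w x) (u x) < δ := by
      calc dist (w x) (u x) = ‖w x - u x‖ := dist_eq_norm _ _
        _ = ‖(w - u) x‖ := by simp
        _ ≤ ‖w - u‖ := (w - u).norm_coe_le_norm x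
        _ = dist w u := (dist_eq_norm _ _).symm
        _ < δ := hw
    have h1 : ((compD h hh w - compD h hh u) v) x
        = (fderiv ℝ h (w x) - fderiv ℝ h (u x)) (v x) := by
      simp [compD_apply]
    rw [h1]
    calc ‖(fderiv ℝ h (w x) - fderiv ℝ h (u x)) (v x)‖
        ≤ ‖fderiv ℝ h (w x) - fderiv ℝ h (u x)‖ * ‖v x‖ :=
          ContinuousLinearMap.le_opNorm _ _
      _ ≤ (ε / 2) * ‖v‖ :=
          mul_le_mul (hkey x (w x) hwx) (v.norm_coe_le_norm x) (norm_nonneg _) (by positivity)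
  rw [dist_eq_norm]
  calc ‖compD h hh w - compD h hh u‖ ≤ ε / 2 := hle
    _ < ε := half_lt_self hε

theorem compCM_contDiff (hh : ContDiff ℝ 1 h) :
    ContDiff ℝ 1 (compCM (K := K) h hh.continuous) := by
  rw [contDiff_one_iff_fderiv]
  refine ⟨fun u => (compCM_hasFDerivAt h hh u).differentiableAt, ?_⟩
  have : fderiv ℝ (compCM (K := K) h hh.continuous) = compD (K := K) h hh :=
    funext fun u => (compCM_hasFDerivAt h hh u).fderiv
  rw [this]
  exact compD_continuous h hh

end CompAux

section MulAux

variable {N : ℕ} (Ω : Set (Fin N → ℝ)) [CompactSpace (closure Ω)]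
  (p : ℝ≥0∞) [Fact (1 ≤ p)] (g : (Fin N → ℝ) → ℝ)

/-- Extension by zero of a scalar continuous function on `closure Ω`. -/
noncomputable def extendS (φ : C(closure Ω, ℝ)) : (Fin N → ℝ) → ℝ :=
  fun x => if hx : x ∈ closure Ω then φ ⟨x, hx⟩ else 0

theorem extendS_norm_le (φ : C(closure Ω, ℝ)) (x : Fin N → ℝ) :
    ‖extendS Ω φ x‖ ≤ ‖φ‖ := by
  unfold extendS
  split
  · exact φ.norm_coe_le_norm _
  · simpa using norm_nonneg φ

theorem memℒp_mul (hΩo : IsOpen Ω) (hg : MemLp g p (volume.restrict Ω)) (φ : C(closure Ω, ℝ)) :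
    MemLp (fun x => g x * extendS Ω φ x) p (volume.restrict Ω) := by
  have hcont : ContinuousOn (extendS Ω φ) (closure Ω) := by
    rw [continuousOn_iff_continuous_restrict]
    have : (closure Ω).restrict (extendS Ω φ) = ⇑φ := by
      funext x
      simp [extendS, Set.restrict, x.2]
    show Continuous ((closure Ω).restrict (extendS Ω φ))
    rw [this]
    exact φ.continuous
  have hmeas : AEStronglyMeasurable (extendS Ω φ) (volume.restrict Ω) :=
    (hcont.mono subset_closure).aestronglyMeasurable hΩo.measurableSet
  refine MemLp.of_le (hg.const_mul ‖φ‖) (hg.1.mul hmeas) ?_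
  filter_upwards with x
  rw [norm_mul, norm_mul, Real.norm_of_nonneg (norm_nonneg φ), mul_comm ‖φ‖]
  exact mul_le_mul_of_nonneg_left (extendS_norm_le Ω φ x) (norm_nonneg _)

/-- Multiplication by `g` as a continuous linear map from `C(closure Ω, ℝ)` into `L^p`. -/
noncomputable def mulCLM (hΩo : IsOpen Ω) (hg : MemLp g p (volume.restrict Ω)) :
    C(closure Ω, ℝ) →L[ℝ] Lp ℝ p (volume.restrict Ω) :=
  LinearMap.mkContinuous
    { toFun := fun φ => (memℒp_mul Ω p g hΩo hg φ).toLp _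
      map_add' := fun φ ψ => by
        have hae : (fun x => g x * extendS Ω (φ + ψ) x)
            =ᵐ[volume.restrict Ω] (fun x => g x * extendS Ω φ x)
              + fun x => g x * extendS Ω ψ x := by
          filter_upwards with x
          simp only [extendS, Pi.add_apply]
          split
          · simp [mul_add]
          · simp
        show (memℒp_mul Ω p g hΩo hg (φ + ψ)).toLp _
            = (memℒp_mul Ω p g hΩo hg φ).toLp _ + (memℒp_mul Ω p g hΩo hg ψ).toLp _
        rw [← MemLp.toLp_add (memℒp_mul Ω p g hΩo hg φ) (memℒp_mul Ω p g hΩo hg ψ)]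
        exact MemLp.toLp_congr _ _ hae
      map_smul' := fun c φ => by
        have hae : (fun x => g x * extendS Ω (c • φ) x)
            =ᵐ[volume.restrict Ω] c • fun x => g x * extendS Ω φ x := by
          filter_upwards with x
          simp only [extendS, Pi.smul_apply, smul_eq_mul]
          split
          · simp; ring
          · simp
        show (memℒp_mul Ω p g hΩo hg (c • φ)).toLp _
            = c • (memℒp_mul Ω p g hΩo hg φ).toLp _
        rw [← MemLp.toLp_const_smul c (memℒp_mul Ω p g hΩo hg φ)]
        exact MemLp.toLp_congr _ _ hae }
    ((eLpNorm g p (volume.restrict Ω)).toReal)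
    (fun φ => by
      simp only [LinearMap.coe_mk, AddHom.coe_mk]
      rw [Lp.norm_toLp]
      have h1 : eLpNorm (fun x => g x * extendS Ω φ x) p (volume.restrict Ω)
          ≤ eLpNorm (‖φ‖ • g) p (volume.restrict Ω) := by
        apply eLpNorm_mono
        intro x
        rw [norm_mul, Pi.smul_apply, smul_eq_mul, norm_mul,
          Real.norm_of_nonneg (norm_nonneg φ), mul_comm ‖φ‖]
        exact mul_le_mul_of_nonneg_left (extendS_norm_le Ω φ x) (norm_nonneg _)
      have h2 : eLpNorm (‖φ‖ • g) p (volume.restrict Ω)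
          = (‖(‖φ‖)‖₊ : ℝ≥0∞) * eLpNorm g p (volume.restrict Ω) :=
        eLpNorm_const_smul _ _ _ _
      calc (eLpNorm (fun x => g x * extendS Ω φ x) p (volume.restrict Ω)).toReal
          ≤ ((‖(‖φ‖)‖₊ : ℝ≥0∞) * eLpNorm g p (volume.restrict Ω)).toReal := by
            apply ENNReal.toReal_mono
            · exact ENNReal.mul_ne_top (by simp) hg.2.ne
            · rw [← h2]; exact h1
        _ = ‖φ‖ * (eLpNorm g p (volume.restrict Ω)).toReal := by
            rw [ENNReal.toReal_mul]
            simp [Real.norm_of_nonneg (norm_nonneg φ)]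
        _ = (eLpNorm g p (volume.restrict Ω)).toReal * ‖φ‖ := mul_comm _ _)

theorem mulCLM_coeFn (hΩo : IsOpen Ω) (hg : MemLp g p (volume.restrict Ω))
    (φ : C(closure Ω, ℝ)) :
    ⇑(mulCLM Ω p g hΩo hg φ) =ᵐ[volume.restrict Ω] fun x => g x * extendS Ω φ x :=
  MemLp.coeFn_toLp (memℒp_mul Ω p g hΩo hg φ)

end MulAux

/-- For a bounded open `Ω ⊂ ℝ^N`, `p ≥ 2`, `g ∈ L^p(Ω)` and
`h ∈ C¹(ℝ^n)`, the map `u ↦ (x ↦ g(x) h(u(x)))` is a `C¹` map from `C(Ω̄; ℝ^n)` into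
`L^p(Ω)`, and its Fréchet derivative at `u` applied to `v` is `x ↦ g(x) ∇h(u(x)) · v(x)`. -/
theorem product_nonlinearity_contDiff
    {N n : ℕ} (Ω : Set (Fin N → ℝ)) (hΩo : IsOpen Ω) (hΩb : Bornology.IsBounded Ω)
    [CompactSpace (closure Ω)]
    (p : ℝ≥0∞) (hp : 2 ≤ p) [Fact (1 ≤ p)]
    (g : (Fin N → ℝ) → ℝ) (hg : MemLp g p (volume.restrict Ω))
    (h : (Fin n → ℝ) → ℝ) (hh : ContDiff ℝ 1 h) :
    ∃ (F : C(closure Ω, Fin n → ℝ) → Lp ℝ p (volume.restrict Ω))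
      (F' : C(closure Ω, Fin n → ℝ) →
        (C(closure Ω, Fin n → ℝ) →L[ℝ] Lp ℝ p (volume.restrict Ω))),
      ContDiff ℝ 1 F ∧
      (∀ u, ⇑(F u) =ᵐ[volume.restrict Ω] fun x => g x * h (extendV Ω u x)) ∧
      (∀ u, HasFDerivAt F (F' u) u) ∧
      (∀ u v, ⇑(F' u v) =ᵐ[volume.restrict Ω]
        fun x => g x * fderiv ℝ h (extendV Ω u x) (extendV Ω v x)) := by
  set Mg := mulCLM Ω p g hΩo hg with hMg
  refine ⟨fun u => Mg (compCM h hh.continuous u),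
    fun u => Mg.comp (compD h hh u), ?_, ?_, ?_, ?_⟩
  · exact Mg.contDiff.comp (compCM_contDiff h hh)
  · intro u
    refine (mulCLM_coeFn Ω p g hΩo hg _).trans ?_
    filter_upwards [ae_restrict_mem hΩo.measurableSet] with x hx
    have hx' : x ∈ closure Ω := subset_closure hx
    simp [extendS, extendV, hx', compCM]
  · intro u
    exact Mg.hasFDerivAt.comp u (compCM_hasFDerivAt h hh u)
  · intro u v
    refine (mulCLM_coeFn Ω p g hΩo hg _).trans ?_
    filter_upwards [ae_restrict_mem hΩo.measurableSet] with x hx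
    have hx' : x ∈ closure Ω := subset_closure hx
    simp [extendS, extendV, hx', compD_apply]
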